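/- Let F be uniform on [0,1], u the identity, and 0 ≤ ε ≤ 1/2. A divider with valuation x playing the optimal price announcement against the distribution band G(F,ε) obtains interim worst-case expected utility Φ_D(x) = x²/4 + (1/4 + ε/2)x + ε²/4 - ε/4 + 1/16 for 0 ≤ x < 1/2 - ε; Φ_D(x) = x/2 for 1/2 - ε ≤ x ≤ 1/2 + ε; and Φ_D(x) = x²/4 + (1/4 - ε/2)x + ε²/4 + ε/4 + 1/16 for 1/2 + ε < x ≤ 1. -/
import Mathlib


open Set

/-- Lower bound of the distribution band `𝒢(U[0,1], ε)`. -/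
noncomputable def bandG0 (ε x : ℝ) : ℝ := if x < 1 then max (x - ε) 0 else 1

/-- Upper bound of the distribution band `𝒢(U[0,1], ε)`. -/
noncomputable def bandG1 (ε x : ℝ) : ℝ := min (x + ε) 1

/-- Risk-neutral divider's expected payoff against belief `G`. -/
noncomputable def payoff (G : ℝ → ℝ) (xD p : ℝ) : ℝ :=
  (xD - p) * G (2 * p) + p * (1 - G (2 * p))

/-- Worst-case payoff over the band. -/
noncomputable def wcPayoff (ε xD p : ℝ) : ℝ :=
  min (payoff (bandG0 ε) xD p) (payoff (bandG1 ε) xD p)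

/-- Optimal price announcement in the uniform example. -/
noncomputable def mOpt (ε xD : ℝ) : ℝ :=
  if xD < 1/2 - ε then xD / 4 - ε / 4 + 1/8
  else if xD ≤ 1/2 + ε then xD / 2
  else xD / 4 + ε / 4 + 1/8

/-- Interim worst-case expected utility of the divider in the uniform example. -/
theorem uniform_band_interim_utility (ε : ℝ) (hε0 : 0 ≤ ε) (hε1 : ε ≤ 1/2)
    (x : ℝ) (hx : x ∈ Icc (0:ℝ) 1) :
    wcPayoff ε x (mOpt ε x) =
      if x < 1/2 - ε then x^2 / 4 + (1/4 + ε / 2) * x + ε^2 / 4 - ε / 4 + 1/16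
      else if x ≤ 1/2 + ε then x / 2
      else x^2 / 4 + (1/4 - ε / 2) * x + ε^2 / 4 + ε / 4 + 1/16 := by
  obtain ⟨hx0, hx1⟩ := hx
  by_cases h1 : x < 1/2 - ε
  · -- low region
    rw [if_pos h1]
    simp only [wcPayoff, mOpt, if_pos h1, payoff, bandG0, bandG1]
    have hlt1 : 2 * (x / 4 - ε / 4 + 1/8) < 1 := by linarith
    rw [if_pos hlt1]
    have hmin1 : min (2 * (x / 4 - ε / 4 + 1/8) + ε) 1
        = 2 * (x / 4 - ε / 4 + 1/8) + ε := min_eq_left (by linarith)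
    rw [hmin1]
    rcases le_or_gt (2 * (x / 4 - ε / 4 + 1/8) - ε) 0 with h | h
    · rw [max_eq_right h]
      rw [min_eq_right (by nlinarith)]
      ring
    · rw [max_eq_left h.le]
      rw [min_eq_right (by nlinarith)]
      ring
  · rw [if_neg h1]
    by_cases h2 : x ≤ 1/2 + ε
    · -- middle region
      rw [if_pos h2]
      simp only [wcPayoff, mOpt, if_neg h1, if_pos h2, payoff]
      have e0 : (x - x/2) * bandG0 ε (2 * (x/2)) + x/2 * (1 - bandG0 ε (2 * (x/2))) = x/2 := by
        ring
      have e1 : (x - x/2) * bandG1 ε (2 * (x/2)) + x/2 * (1 - bandG1 ε (2 * (x/2))) = x/2 := by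
        ring
      rw [e0, e1, min_self]
    · -- high region
      rw [if_neg h2]
      push_neg at h1 h2
      have hε : ε < 1/2 := by linarith
      simp only [wcPayoff, mOpt, if_neg (not_lt.mpr h1), if_neg (not_le.mpr h2), payoff,
        bandG0, bandG1]
      have hlt1 : 2 * (x / 4 + ε / 4 + 1/8) < 1 := by linarith
      rw [if_pos hlt1]
      have hmax : max (2 * (x / 4 + ε / 4 + 1/8) - ε) 0
          = 2 * (x / 4 + ε / 4 + 1/8) - ε := max_eq_left (by linarith)
      rw [hmax]
      rcases le_or_gt (2 * (x / 4 + ε / 4 + 1/8) + ε) 1 with h | h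
      · rw [min_eq_left h]
        rw [min_eq_left (by nlinarith)]
        ring
      · rw [min_eq_right h.le]
        rw [min_eq_left (by nlinarith)]
        ring
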